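/- Let m : ℝ × ℝ → ℝ satisfy 0 < m_min ≤ m(x, u) for all (x, u), be bounded and Lipschitz in the first variable uniformly in the second, and let z : ℝ → ℝ be continuous. Let M(s, t, x) be the flow of y' = m(y, z(s)) with M(t,t,x) = x. Then for fixed s and x, the map t ↦ M(s, t, x) is strictly decreasing; in particular it is injective. -/

import Mathlib

/-- If moreover `0 < m_min ≤ m`, the flow `t ↦ M(s,t,x)` of the initial time is
strictly decreasing, in particular injective. -/
theorem stmt_3 (m : ℝ × ℝ → ℝ) (z : ℝ → ℝ) (L C mmin : ℝ)
    (hmc : Continuous m) (hmb : ∀ p, |m p| ≤ C)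
    (hmmin : 0 < mmin) (hmlow : ∀ p, mmin ≤ m p)
    (hLip : ∀ (x₁ x₂ u : ℝ), |m (x₁, u) - m (x₂, u)| ≤ L * |x₁ - x₂|)
    (hz : Continuous z)
    (M : ℝ → ℝ → ℝ → ℝ)
    (hM0 : ∀ t x : ℝ, M t t x = x)
    (hMder : ∀ t x s : ℝ, HasDerivAt (fun u => M u t x) (m (M s t x, z s)) s) :
    ∀ s x : ℝ, StrictAnti (fun t => M s t x) ∧ Function.Injective (fun t => M s t x) := by
  intro s x
  -- the vector field
  set v : ℝ → ℝ → ℝ := fun u y => m (y, z u) with hv_def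
  have hv : ∀ u, LipschitzWith (Real.toNNReal L) (v u) := by
    intro u
    apply LipschitzWith.of_dist_le_mul
    intro y₁ y₂
    rw [Real.dist_eq, Real.dist_eq, Real.coe_toNNReal']
    calc |v u y₁ - v u y₂| ≤ L * |y₁ - y₂| := hLip y₁ y₂ (z u)
      _ ≤ max L 0 * |y₁ - y₂| := by
          apply mul_le_mul_of_nonneg_right (le_max_left _ _) (abs_nonneg _)
  -- each trajectory u ↦ M u t x is strictly monotone
  have hsm : ∀ t : ℝ, StrictMono (fun u => M u t x) := by
    intro t
    apply strictMono_of_deriv_pos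
    intro u
    rw [(hMder t x u).deriv]
    exact lt_of_lt_of_le hmmin (hmlow _)
  -- key: if two trajectories agree somewhere, then t₁ = t₂
  have key : ∀ t₁ t₂ u : ℝ, M u t₁ x = M u t₂ x → t₁ = t₂ := by
    intro t₁ t₂ u heq
    set a : ℝ := min u t₁ - 1 with ha_def
    set b : ℝ := max u t₁ + 1 with hb_def
    have hu : u ∈ Set.Ioo a b :=
      ⟨by simp [ha_def]; nlinarith [min_le_left u t₁, le_max_left u t₁],
       by simp [hb_def]; nlinarith [min_le_left u t₁, le_max_left u t₁]⟩
    have ht₁ : t₁ ∈ Set.Ioo a b :=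
      ⟨by simp [ha_def]; nlinarith [min_le_right u t₁, le_max_right u t₁],
       by simp [hb_def]; nlinarith [min_le_right u t₁, le_max_right u t₁]⟩
    have hEq : Set.EqOn (fun w => M w t₁ x) (fun w => M w t₂ x) (Set.Ioo a b) := by
      apply ODE_solution_unique_of_mem_Ioo (s := fun _ => (Set.univ : Set ℝ))
        (v := v) (fun u _ => (hv u).lipschitzOnWith) hu
      · intro w _
        exact ⟨hMder t₁ x w, trivial⟩
      · intro w _
        exact ⟨hMder t₂ x w, trivial⟩
      · exact heq
    have h1 : M t₁ t₂ x = x := by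
      have := hEq ht₁
      simp only [hM0] at this
      exact this.symm
    have h2 : M t₂ t₂ x = x := hM0 t₂ x
    exact (hsm t₂).injective (h1.trans h2.symm)
  have hanti : StrictAnti (fun t => M s t x) := by
    intro t₁ t₂ hlt
    -- at time t₁: M t₁ t₂ x < M t₂ t₂ x = x = M t₁ t₁ x
    have hstart : M t₁ t₂ x < M t₁ t₁ x := by
      rw [hM0]
      calc M t₁ t₂ x < M t₂ t₂ x := hsm t₂ hlt
        _ = x := hM0 t₂ x
    set h : ℝ → ℝ := fun w => M w t₁ x - M w t₂ x with hh_def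
    have hcont : Continuous h := by
      apply Continuous.sub
      · exact continuous_iff_continuousAt.mpr
          fun w => (hMder t₁ x w).differentiableAt.continuousAt
      · exact continuous_iff_continuousAt.mpr
          fun w => (hMder t₂ x w).differentiableAt.continuousAt
    have ht₁pos : 0 < h t₁ := by
      simp only [hh_def]
      linarith
    have hne : ∀ w, h w ≠ 0 := by
      intro w hw
      have : M w t₁ x = M w t₂ x := by simp only [hh_def] at hw; linarith
      exact absurd (key t₁ t₂ w this) (ne_of_lt hlt)
    -- show 0 < h s by IVT
    by_contra hcon
    push_neg at hcon
    have hs_le : h s ≤ 0 := by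
      simp only [hh_def]
      simpa using sub_nonpos.mpr hcon
    have : (0 : ℝ) ∈ Set.uIcc (h s) (h t₁) :=
      Set.mem_uIcc.mpr (Or.inl ⟨hs_le, le_of_lt ht₁pos⟩)
    obtain ⟨w, _, hw⟩ := intermediate_value_uIcc (hcont.continuousOn) this
    exact hne w hw
  exact ⟨hanti, hanti.injective⟩
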